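/- Masked self-attention f^m with parameters (A, V), defined by f^m(X)_i = f(x₁,…,x_i)_i, is Lipschitz on B_R^n with Lip(f^m|_{B_R^n}) ≤ √3 ‖V‖₂ (‖A‖₂² R⁴ (n + 1) + n)^{1/2}. -/

import Mathlib

open Matrix

/-- Masked self-attention: token `i` only attends to tokens `j ≤ i`. -/
noncomputable def maskedAttnF (n d k : ℕ) (A : Matrix (Fin d) (Fin d) ℝ)
    (V : Matrix (Fin k) (Fin d) ℝ) :
    PiLp 2 (fun _ : Fin n => EuclideanSpace ℝ (Fin d)) →
      PiLp 2 (fun _ : Fin n => EuclideanSpace ℝ (Fin k)) :=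
  fun x => WithLp.toLp 2 (fun i => WithLp.toLp 2 (V.mulVec (∑ j ∈ Finset.univ.filter (fun j => j ≤ i),
      (Real.exp ((x i) ⬝ᵥ (Aᵀ.mulVec (x j))) /
        ∑ l ∈ Finset.univ.filter (fun l => l ≤ i),
          Real.exp ((x i) ⬝ᵥ (Aᵀ.mulVec (x l)))) • (x j : Fin d → ℝ))))

/-- Spectral norm of a matrix. -/
noncomputable def spec {a b : ℕ} (M : Matrix (Fin a) (Fin b) ℝ) : ℝ :=
  ‖LinearMap.toContinuousLinearMap (Matrix.toEuclideanLin M)‖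

open Finset


lemma spec_nonneg {a b : ℕ} (M : Matrix (Fin a) (Fin b) ℝ) : 0 ≤ spec M := norm_nonneg _

lemma mulVec_norm_le' {a b : ℕ} (M : Matrix (Fin a) (Fin b) ℝ) (v : EuclideanSpace ℝ (Fin b))
    (z : EuclideanSpace ℝ (Fin a)) (hz : z = (Matrix.toEuclideanLin M) v) :
    ‖z‖ ≤ spec M * ‖v‖ := by
  rw [hz]
  exact (LinearMap.toContinuousLinearMap (Matrix.toEuclideanLin M)).le_opNorm v


lemma dot_bound {d : ℕ} (A : Matrix (Fin d) (Fin d) ℝ) (v u : EuclideanSpace ℝ (Fin d)) :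
    |(v : Fin d → ℝ) ⬝ᵥ (Aᵀ.mulVec u)| ≤ spec A * ‖v‖ * ‖u‖ := by
  set Av : EuclideanSpace ℝ (Fin d) := (Matrix.toEuclideanLin A) v with hAv
  have h1 : (v : Fin d → ℝ) ⬝ᵥ (Aᵀ.mulVec u) = (A.mulVec v) ⬝ᵥ (u : Fin d → ℝ) := by
    rw [Matrix.dotProduct_mulVec, Matrix.vecMul_transpose]
  have h2 : (A.mulVec v) ⬝ᵥ (u : Fin d → ℝ) = inner (𝕜 := ℝ) Av u := by
    simp [PiLp.inner_apply, dotProduct, RCLike.inner_apply, mul_comm]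
    exact Finset.sum_congr rfl (fun x _ => by rw [mul_comm]; rfl)
  rw [h1, h2]
  calc |inner (𝕜 := ℝ) Av u| ≤ ‖Av‖ * ‖u‖ := abs_real_inner_le_norm _ _
    _ ≤ (spec A * ‖v‖) * ‖u‖ :=
        mul_le_mul_of_nonneg_right (mulVec_norm_le' A v Av hAv) (norm_nonneg _)
    _ = spec A * ‖v‖ * ‖u‖ := by ring


lemma wCS {ι : Type*} (S : Finset ι) (p f g : ι → ℝ) (hp : ∀ j ∈ S, 0 ≤ p j) :
    (∑ j ∈ S, p j * (f j * g j)) ^ 2 ≤ (∑ j ∈ S, p j * f j ^ 2) * (∑ j ∈ S, p j * g j ^ 2) := by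
  have h := Finset.sum_mul_sq_le_sq_mul_sq S
    (fun j => Real.sqrt (p j) * f j) (fun j => Real.sqrt (p j) * g j)
  have e1 : ∀ j ∈ S, (Real.sqrt (p j) * f j) * (Real.sqrt (p j) * g j) = p j * (f j * g j) := by
    intro j hj
    have : Real.sqrt (p j) * Real.sqrt (p j) = p j := Real.mul_self_sqrt (hp j hj)
    calc (Real.sqrt (p j) * f j) * (Real.sqrt (p j) * g j)
        = (Real.sqrt (p j) * Real.sqrt (p j)) * (f j * g j) := by ring
      _ = p j * (f j * g j) := by rw [this]
  have e2 : ∀ j ∈ S, (Real.sqrt (p j) * f j) ^ 2 = p j * f j ^ 2 := by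
    intro j hj; rw [mul_pow, Real.sq_sqrt (hp j hj)]
  have e3 : ∀ j ∈ S, (Real.sqrt (p j) * g j) ^ 2 = p j * g j ^ 2 := by
    intro j hj; rw [mul_pow, Real.sq_sqrt (hp j hj)]
  rw [Finset.sum_congr rfl e1, Finset.sum_congr rfl e2, Finset.sum_congr rfl e3] at h
  exact h

lemma cov_bound {ι : Type*} (S : Finset ι) (p w y : ι → ℝ) (M : ℝ) (hM : 0 ≤ M)
    (hp : ∀ j ∈ S, 0 ≤ p j) (hp1 : ∑ j ∈ S, p j = 1)
    (hw : ∀ j ∈ S, w j ^ 2 ≤ 1) (hy : ∀ j ∈ S, |y j| ≤ M) :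
    |(∑ j ∈ S, p j * (w j * y j)) - (∑ j ∈ S, p j * w j) * (∑ j ∈ S, p j * y j)| ≤ M := by
  set Ew := ∑ j ∈ S, p j * w j with hEw
  set Ey := ∑ j ∈ S, p j * y j with hEy
  have expand : ∑ j ∈ S, p j * ((w j - Ew) * (y j - Ey))
      = (∑ j ∈ S, p j * (w j * y j)) - Ew * Ey := by
    have e1 : ∀ j, p j * ((w j - Ew) * (y j - Ey))
        = p j * (w j * y j) - Ew * (p j * y j) - Ey * (p j * w j) + (Ew * Ey) * p j := by
      intro j; ring
    simp_rw [e1]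
    rw [Finset.sum_add_distrib, Finset.sum_sub_distrib, Finset.sum_sub_distrib,
      ← Finset.mul_sum, ← Finset.mul_sum, ← Finset.mul_sum, ← hEw, ← hEy, hp1]
    ring
  have cs := wCS S p (fun j => w j - Ew) (fun j => y j - Ey) hp
  have hv1 : ∑ j ∈ S, p j * (w j - Ew) ^ 2 ≤ 1 := by
    have e2 : ∀ j ∈ S, p j * (w j - Ew) ^ 2 = p j * w j ^ 2 - 2 * Ew * (p j * w j) + Ew ^ 2 * p j := by
      intro j _; ring
    rw [Finset.sum_congr rfl e2, Finset.sum_add_distrib, Finset.sum_sub_distrib,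
      ← Finset.mul_sum, ← Finset.mul_sum, ← hEw, hp1]
    have : ∑ j ∈ S, p j * w j ^ 2 ≤ ∑ j ∈ S, p j := by
      apply Finset.sum_le_sum
      intro j hj
      calc p j * w j ^ 2 ≤ p j * 1 := by
            exact mul_le_mul_of_nonneg_left (hw j hj) (hp j hj)
        _ = p j := mul_one _
    nlinarith [sq_nonneg Ew]
  have hv2 : ∑ j ∈ S, p j * (y j - Ey) ^ 2 ≤ M ^ 2 := by
    have e2 : ∀ j ∈ S, p j * (y j - Ey) ^ 2 = p j * y j ^ 2 - 2 * Ey * (p j * y j) + Ey ^ 2 * p j := by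
      intro j _; ring
    rw [Finset.sum_congr rfl e2, Finset.sum_add_distrib, Finset.sum_sub_distrib,
      ← Finset.mul_sum, ← Finset.mul_sum, ← hEy, hp1]
    have : ∑ j ∈ S, p j * y j ^ 2 ≤ ∑ j ∈ S, p j * M ^ 2 := by
      apply Finset.sum_le_sum
      intro j hj
      apply mul_le_mul_of_nonneg_left _ (hp j hj)
      calc y j ^ 2 = |y j| ^ 2 := (sq_abs _).symm
        _ ≤ M ^ 2 := pow_le_pow_left₀ (abs_nonneg _) (hy j hj) 2
    rw [← Finset.sum_mul, hp1, one_mul] at this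
    nlinarith [sq_nonneg Ey]
  rw [← expand]
  have h1 : (∑ j ∈ S, p j * ((w j - Ew) * (y j - Ey))) ^ 2 ≤ M ^ 2 := by
    calc (∑ j ∈ S, p j * ((w j - Ew) * (y j - Ey))) ^ 2
        ≤ (∑ j ∈ S, p j * (w j - Ew) ^ 2) * (∑ j ∈ S, p j * (y j - Ey) ^ 2) := cs
      _ ≤ 1 * M ^ 2 := by
          apply mul_le_mul hv1 hv2 _ zero_le_one
          apply Finset.sum_nonneg; intro j hj; exact mul_nonneg (hp j hj) (sq_nonneg _)
      _ = M ^ 2 := one_mul _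
  rcases abs_cases (∑ j ∈ S, p j * ((w j - Ew) * (y j - Ey))) with ⟨h, _⟩ | ⟨h, _⟩ <;> nlinarith

-- Jensen for norms
lemma jensen_norm_sq {ι : Type*} {E : Type*} [SeminormedAddCommGroup E] [NormedSpace ℝ E]
    (S : Finset ι) (p : ι → ℝ) (hp : ∀ j ∈ S, 0 ≤ p j) (hp1 : ∑ j ∈ S, p j = 1)
    (v : ι → E) : ‖∑ j ∈ S, p j • v j‖ ^ 2 ≤ ∑ j ∈ S, p j * ‖v j‖ ^ 2 := by
  have h1 : ‖∑ j ∈ S, p j • v j‖ ≤ ∑ j ∈ S, p j * ‖v j‖ := by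
    calc ‖∑ j ∈ S, p j • v j‖ ≤ ∑ j ∈ S, ‖p j • v j‖ := norm_sum_le _ _
      _ = ∑ j ∈ S, p j * ‖v j‖ := by
          apply Finset.sum_congr rfl; intro j hj
          rw [norm_smul, Real.norm_eq_abs, abs_of_nonneg (hp j hj)]
  have h2 : (∑ j ∈ S, p j * ‖v j‖) ^ 2 ≤ (∑ j ∈ S, p j) * (∑ j ∈ S, p j * ‖v j‖ ^ 2) := by
    have := wCS S p (fun _ => 1) (fun j => ‖v j‖) hp
    simpa using this
  rw [hp1, one_mul] at h2
  calc ‖∑ j ∈ S, p j • v j‖ ^ 2 ≤ (∑ j ∈ S, p j * ‖v j‖) ^ 2 := by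
        apply pow_le_pow_left₀ (norm_nonneg _) h1
    _ ≤ _ := h2


lemma softmax_l1 {ι : Type*} (S : Finset ι) (hS : S.Nonempty)
    (a b : ι → ℝ) (M : ℝ) (hM : ∀ j ∈ S, |a j - b j| ≤ M) :
    ∑ j ∈ S, |Real.exp (a j) / (∑ l ∈ S, Real.exp (a l))
      - Real.exp (b j) / (∑ l ∈ S, Real.exp (b l))| ≤ M := by
  classical
  obtain ⟨j₀, hj₀⟩ := hS
  have hM0 : 0 ≤ M := le_trans (abs_nonneg _) (hM j₀ hj₀)
  set y : ι → ℝ := fun j => a j - b j with hy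
  set c : ℝ → ι → ℝ := fun t j => b j + t * y j with hc
  set Z : ℝ → ℝ := fun t => ∑ j ∈ S, Real.exp (c t j) with hZdef
  have hZpos : ∀ t, 0 < Z t := fun t => Finset.sum_pos (fun j _ => Real.exp_pos _) ⟨j₀, hj₀⟩
  set w : ι → ℝ := fun j => if 0 ≤ Real.exp (a j) / (∑ l ∈ S, Real.exp (a l))
      - Real.exp (b j) / (∑ l ∈ S, Real.exp (b l)) then 1 else -1 with hwdef
  have hw2 : ∀ j, w j ^ 2 = 1 := by
    intro j
    by_cases h : 0 ≤ Real.exp (a j) / (∑ l ∈ S, Real.exp (a l))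
      - Real.exp (b j) / (∑ l ∈ S, Real.exp (b l)) <;> simp [hwdef, h]
  set N : ℝ → ℝ := fun t => ∑ j ∈ S, w j * Real.exp (c t j) with hNdef
  set N' : ℝ → ℝ := fun t => ∑ j ∈ S, w j * (y j * Real.exp (c t j)) with hN'def
  set Z' : ℝ → ℝ := fun t => ∑ j ∈ S, y j * Real.exp (c t j) with hZ'def
  set φ : ℝ → ℝ := fun t => N t / Z t with hφdef
  set φ' : ℝ → ℝ := fun t => (N' t * Z t - N t * Z' t) / Z t ^ 2 with hφ'def
  have hdc : ∀ (j : ι) (t : ℝ), HasDerivAt (fun s => Real.exp (c s j)) (y j * Real.exp (c t j)) t := by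
    intro j t
    have h1 : HasDerivAt (fun s : ℝ => b j + s * y j) (y j) t := by
      simpa using ((hasDerivAt_id t).mul_const (y j)).const_add (b j)
    have h2 := h1.exp
    simpa [hc, mul_comm] using h2
  have hdN : ∀ t, HasDerivAt N (N' t) t := by
    intro t
    exact HasDerivAt.fun_sum (fun j hj => ((hdc j t).const_mul (w j)))
  have hdZ : ∀ t, HasDerivAt Z (Z' t) t := by
    intro t
    exact HasDerivAt.fun_sum (fun j hj => (hdc j t))
  have hdφ : ∀ t, HasDerivAt φ (φ' t) t := by
    intro t
    exact (hdN t).div (hdZ t) (ne_of_gt (hZpos t))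
  have hbound : ∀ t, |φ' t| ≤ M := by
    intro t
    set P : ι → ℝ := fun j => Real.exp (c t j) / Z t with hP
    have hPnn : ∀ j ∈ S, 0 ≤ P j := fun j _ => div_nonneg (Real.exp_pos _).le (hZpos t).le
    have hPsum : ∑ j ∈ S, P j = 1 := by
      rw [← Finset.sum_div]; exact div_self (ne_of_gt (hZpos t))
    have key : φ' t = (∑ j ∈ S, P j * (w j * y j))
        - (∑ j ∈ S, P j * w j) * (∑ j ∈ S, P j * y j) := by
      have h1 : ∑ j ∈ S, P j * (w j * y j) = N' t / Z t := by
        rw [hN'def, Finset.sum_div]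
        exact Finset.sum_congr rfl (fun j _ => by simp only [hP]; ring)
      have h2 : ∑ j ∈ S, P j * w j = N t / Z t := by
        rw [hNdef, Finset.sum_div]
        exact Finset.sum_congr rfl (fun j _ => by simp only [hP]; ring)
      have h3 : ∑ j ∈ S, P j * y j = Z' t / Z t := by
        rw [hZ'def, Finset.sum_div]
        exact Finset.sum_congr rfl (fun j _ => by simp only [hP]; ring)
      have halg : ∀ (u v z q : ℝ), z ≠ 0 → (u * z - v * q) / z ^ 2 = u / z - (v / z) * (q / z) := by
        intros u v z q hz; field_simp
      rw [h1, h2, h3]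
      exact halg _ _ _ _ (ne_of_gt (hZpos t))
    rw [key]
    exact cov_bound S P w y M hM0 hPnn hPsum (fun j _ => le_of_eq (hw2 j)) (fun j hj => hM j hj)
  have hlip : ‖φ 1 - φ 0‖ ≤ M * ‖(1:ℝ) - 0‖ := by
    apply Convex.norm_image_sub_le_of_norm_hasDerivWithin_le
      (f' := φ') (fun t _ => (hdφ t).hasDerivWithinAt)
      (fun t _ => by simpa [Real.norm_eq_abs] using hbound t)
      convex_univ (Set.mem_univ 0) (Set.mem_univ 1)
  have hZ1 : Z 1 = ∑ l ∈ S, Real.exp (a l) :=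
    Finset.sum_congr rfl (fun j _ => by simp [hc, hy])
  have hZ0 : Z 0 = ∑ l ∈ S, Real.exp (b l) :=
    Finset.sum_congr rfl (fun j _ => by simp [hc])
  have hN1 : N 1 = ∑ j ∈ S, w j * Real.exp (a j) :=
    Finset.sum_congr rfl (fun j _ => by simp [hc, hy])
  have hN0 : N 0 = ∑ j ∈ S, w j * Real.exp (b j) :=
    Finset.sum_congr rfl (fun j _ => by simp [hc])
  have hφ1 : φ 1 - φ 0 = ∑ j ∈ S, w j * (Real.exp (a j) / (∑ l ∈ S, Real.exp (a l))
      - Real.exp (b j) / (∑ l ∈ S, Real.exp (b l))) := by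
    rw [hφdef]
    simp only [hZ1, hZ0, hN1, hN0]
    rw [Finset.sum_div, Finset.sum_div, ← Finset.sum_sub_distrib]
    exact (Finset.sum_congr rfl (fun j _ => by ring)).symm
  have habs : ∀ j ∈ S, |Real.exp (a j) / (∑ l ∈ S, Real.exp (a l))
      - Real.exp (b j) / (∑ l ∈ S, Real.exp (b l))|
      = w j * (Real.exp (a j) / (∑ l ∈ S, Real.exp (a l))
      - Real.exp (b j) / (∑ l ∈ S, Real.exp (b l))) := by
    intro j _
    rcases le_or_gt 0 (Real.exp (a j) / (∑ l ∈ S, Real.exp (a l))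
      - Real.exp (b j) / (∑ l ∈ S, Real.exp (b l))) with h | h
    · have hwj : w j = 1 := by simp only [hwdef]; rw [if_pos h]
      rw [hwj, one_mul, abs_of_nonneg h]
    · have hwj : w j = -1 := by simp only [hwdef]; rw [if_neg (not_le.mpr h)]
      rw [hwj, abs_of_neg h]; ring
  rw [Finset.sum_congr rfl habs, ← hφ1]
  calc φ 1 - φ 0 ≤ |φ 1 - φ 0| := le_abs_self _
    _ ≤ M * ‖(1:ℝ) - 0‖ := hlip
    _ = M := by simp

lemma le_of_sq_le_sq' {x z : ℝ} (hx : 0 ≤ x) (hz : 0 ≤ z) (h : x ^ 2 ≤ z ^ 2) : x ≤ z := by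
  nlinarith

set_option maxHeartbeats 1000000 in
/-- `Lip(f^m|_{B_R^n}) ≤ √3 ‖V‖₂ (‖A‖₂² R⁴ (n + 1) + n)^{1/2}`. -/
theorem masked_attn_lipschitz_on_ball {n d k : ℕ} (R : ℝ) (hR : 0 < R)
    (A : Matrix (Fin d) (Fin d) ℝ) (V : Matrix (Fin k) (Fin d) ℝ)
    (X Y : PiLp 2 (fun _ : Fin n => EuclideanSpace ℝ (Fin d)))
    (hX : ∀ i, ‖X i‖ ≤ R) (hY : ∀ i, ‖Y i‖ ≤ R) :
    ‖maskedAttnF n d k A V X - maskedAttnF n d k A V Y‖ ≤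
      Real.sqrt 3 * spec V *
        Real.sqrt (spec A ^ 2 * R ^ 4 * (n + 1) + n) * ‖X - Y‖ := by
  classical
  set F := maskedAttnF n d k A V with hF
  set D := ‖X - Y‖ with hD
  have hDnn : 0 ≤ D := norm_nonneg _
  have hDsq : D ^ 2 = ∑ i, ‖X i - Y i‖ ^ 2 := by
    rw [hD, PiLp.norm_sq_eq_of_L2]
    exact Finset.sum_congr rfl (fun i _ => by rw [PiLp.sub_apply])
  have hdel : ∀ i, ‖X i - Y i‖ ≤ D := by
    intro i
    have h1 : ‖X i - Y i‖ ^ 2 ≤ D ^ 2 := by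
      rw [hDsq]
      exact Finset.single_le_sum (f := fun i => ‖X i - Y i‖ ^ 2)
        (fun i _ => sq_nonneg _) (Finset.mem_univ i)
    exact le_of_sq_le_sq' (norm_nonneg _) hDnn h1
  set C := spec A * R ^ 2 with hC
  have hCnn : 0 ≤ C := mul_nonneg (spec_nonneg A) (by positivity)
  -- per-coordinate bound
  have hkey : ∀ i, ‖F X i - F Y i‖ ^ 2
      ≤ spec V ^ 2 * (3 * (C ^ 2 * D ^ 2 + C ^ 2 * ‖X i - Y i‖ ^ 2 + D ^ 2)) := by
    intro i
    set δ := ‖X i - Y i‖ with hδ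
    have hδnn : 0 ≤ δ := norm_nonneg _
    set S : Finset (Fin n) := Finset.univ.filter (fun j => j ≤ i) with hS
    have hSne : S.Nonempty := ⟨i, by simp [hS]⟩
    set af : Fin n → ℝ := fun j => (X i) ⬝ᵥ (Aᵀ.mulVec (X j)) with haf
    set bf : Fin n → ℝ := fun j => (Y i) ⬝ᵥ (Aᵀ.mulVec (Y j)) with hbf
    set p : Fin n → ℝ := fun j => Real.exp (af j) / ∑ l ∈ S, Real.exp (af l) with hp
    set q : Fin n → ℝ := fun j => Real.exp (bf j) / ∑ l ∈ S, Real.exp (bf l) with hq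
    have hZb : 0 < ∑ l ∈ S, Real.exp (bf l) := Finset.sum_pos (fun l _ => Real.exp_pos _) hSne
    have hqnn : ∀ j ∈ S, 0 ≤ q j := fun j _ => div_nonneg (Real.exp_pos _).le hZb.le
    have hq1 : ∑ j ∈ S, q j = 1 := by
      rw [hq, ← Finset.sum_div]
      exact div_self (ne_of_gt hZb)
    have hFX : F X i = (WithLp.toLp 2 (V.mulVec ((∑ j ∈ S, p j • X j : EuclideanSpace ℝ (Fin d)) : Fin d → ℝ)) : EuclideanSpace ℝ (Fin k)) := by
      rw [WithLp.ofLp_sum]; simp only [WithLp.ofLp_smul]; rfl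
    have hFY : F Y i = (WithLp.toLp 2 (V.mulVec ((∑ j ∈ S, q j • Y j : EuclideanSpace ℝ (Fin d)) : Fin d → ℝ)) : EuclideanSpace ℝ (Fin k)) := by
      rw [WithLp.ofLp_sum]; simp only [WithLp.ofLp_smul]; rfl
    -- split
    have hsplit : (∑ j ∈ S, p j • X j) - (∑ j ∈ S, q j • Y j)
        = (∑ j ∈ S, (p j - q j) • X j) + (∑ j ∈ S, q j • (X j - Y j)) := by
      rw [← Finset.sum_add_distrib]
      rw [← Finset.sum_sub_distrib]
      exact Finset.sum_congr rfl (fun j _ => by rw [sub_smul, smul_sub]; abel)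
    -- logit bound
    set Mi := spec A * R * (D + δ) with hMi
    have hMinn : 0 ≤ Mi := by
      apply mul_nonneg (mul_nonneg (spec_nonneg A) hR.le)
      linarith
    have hlog : ∀ j ∈ S, |af j - bf j| ≤ Mi := by
      intro j _
      have hid : af j - bf j = (X i : Fin d → ℝ) ⬝ᵥ (Aᵀ.mulVec ((X j - Y j : EuclideanSpace ℝ (Fin d)) : Fin d → ℝ))
          + ((X i - Y i : EuclideanSpace ℝ (Fin d)) : Fin d → ℝ) ⬝ᵥ (Aᵀ.mulVec (Y j)) := by
        simp only [WithLp.ofLp_sub]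
        rw [Matrix.mulVec_sub, dotProduct_sub, sub_dotProduct]
        simp only [haf, hbf]
        ring
      rw [hid]
      have h1 := dot_bound A (X i) (X j - Y j)
      have h2 := dot_bound A (X i - Y i) (Y j)
      have h3 : spec A * ‖X i‖ * ‖X j - Y j‖ ≤ spec A * R * D := by
        calc spec A * ‖X i‖ * ‖X j - Y j‖ = spec A * (‖X i‖ * ‖X j - Y j‖) := by ring
          _ ≤ spec A * (R * D) := mul_le_mul_of_nonneg_left
              (mul_le_mul (hX i) (hdel j) (norm_nonneg _) hR.le) (spec_nonneg A)
          _ = spec A * R * D := by ring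
      have h4 : spec A * ‖X i - Y i‖ * ‖Y j‖ ≤ spec A * R * δ := by
        calc spec A * ‖X i - Y i‖ * ‖Y j‖ = spec A * (δ * ‖Y j‖) := by rw [← hδ]; ring
          _ ≤ spec A * (δ * R) := mul_le_mul_of_nonneg_left
              (mul_le_mul_of_nonneg_left (hY j) hδnn) (spec_nonneg A)
          _ = spec A * R * δ := by ring
      calc |(X i : Fin d → ℝ) ⬝ᵥ (Aᵀ.mulVec ((X j - Y j : EuclideanSpace ℝ (Fin d)) : Fin d → ℝ))
          + ((X i - Y i : EuclideanSpace ℝ (Fin d)) : Fin d → ℝ) ⬝ᵥ (Aᵀ.mulVec (Y j))|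
          ≤ |(X i : Fin d → ℝ) ⬝ᵥ (Aᵀ.mulVec ((X j - Y j : EuclideanSpace ℝ (Fin d)) : Fin d → ℝ))|
          + |((X i - Y i : EuclideanSpace ℝ (Fin d)) : Fin d → ℝ) ⬝ᵥ (Aᵀ.mulVec (Y j))| := abs_add_le _ _
        _ ≤ spec A * ‖X i‖ * ‖X j - Y j‖ + spec A * ‖X i - Y i‖ * ‖Y j‖ := add_le_add h1 h2
        _ ≤ spec A * R * D + spec A * R * δ := add_le_add h3 h4
        _ = Mi := by rw [hMi]; ring
    -- T1
    have hT1 : ‖∑ j ∈ S, (p j - q j) • X j‖ ≤ Mi * R := by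
      calc ‖∑ j ∈ S, (p j - q j) • X j‖ ≤ ∑ j ∈ S, ‖(p j - q j) • X j‖ := norm_sum_le _ _
        _ = ∑ j ∈ S, |p j - q j| * ‖X j‖ := by
            exact Finset.sum_congr rfl (fun j _ => by rw [norm_smul, Real.norm_eq_abs])
        _ ≤ ∑ j ∈ S, |p j - q j| * R := by
            apply Finset.sum_le_sum
            intro j _
            exact mul_le_mul_of_nonneg_left (hX j) (abs_nonneg _)
        _ = (∑ j ∈ S, |p j - q j|) * R := by rw [Finset.sum_mul]
        _ ≤ Mi * R := by
            apply mul_le_mul_of_nonneg_right _ hR.le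
            exact softmax_l1 S hSne af bf Mi hlog
    -- T2
    have hT2 : ‖∑ j ∈ S, q j • (X j - Y j)‖ ≤ D := by
      apply le_of_sq_le_sq' (norm_nonneg _) hDnn
      calc ‖∑ j ∈ S, q j • (X j - Y j)‖ ^ 2 ≤ ∑ j ∈ S, q j * ‖X j - Y j‖ ^ 2 :=
            jensen_norm_sq S q hqnn hq1 _
        _ ≤ ∑ j ∈ S, q j * D ^ 2 := by
            apply Finset.sum_le_sum
            intro j hj
            apply mul_le_mul_of_nonneg_left _ (hqnn j hj)
            exact pow_le_pow_left₀ (norm_nonneg _) (hdel j) 2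
        _ = D ^ 2 := by rw [← Finset.sum_mul, hq1, one_mul]
    -- assemble
    have hdiff : F X i - F Y i
        = ((Matrix.toEuclideanLin V) ((∑ j ∈ S, p j • X j) - (∑ j ∈ S, q j • Y j)) : EuclideanSpace ℝ (Fin k)) := by
      rw [hFX, hFY]
      have : (Matrix.toEuclideanLin V) ((∑ j ∈ S, p j • X j) - (∑ j ∈ S, q j • Y j))
          = (Matrix.toEuclideanLin V) (∑ j ∈ S, p j • X j)
            - (Matrix.toEuclideanLin V) (∑ j ∈ S, q j • Y j) := map_sub _ _ _
      rw [this]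
      rfl
    have hVnorm : ‖F X i - F Y i‖
        ≤ spec V * ‖(∑ j ∈ S, p j • X j) - (∑ j ∈ S, q j • Y j)‖ :=
      mulVec_norm_le' V _ _ hdiff
    have hgnorm : ‖(∑ j ∈ S, p j • X j) - (∑ j ∈ S, q j • Y j)‖ ≤ C * D + C * δ + D := by
      rw [hsplit]
      calc ‖(∑ j ∈ S, (p j - q j) • X j) + (∑ j ∈ S, q j • (X j - Y j))‖
          ≤ ‖∑ j ∈ S, (p j - q j) • X j‖ + ‖∑ j ∈ S, q j • (X j - Y j)‖ := norm_add_le _ _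
        _ ≤ Mi * R + D := add_le_add hT1 hT2
        _ = C * D + C * δ + D := by rw [hMi, hC]; ring
    have hfin : ‖F X i - F Y i‖ ≤ spec V * (C * D + C * δ + D) := by
      calc ‖F X i - F Y i‖ ≤ spec V * ‖(∑ j ∈ S, p j • X j) - (∑ j ∈ S, q j • Y j)‖ := hVnorm
        _ ≤ spec V * (C * D + C * δ + D) :=
            mul_le_mul_of_nonneg_left hgnorm (spec_nonneg V)
    have hsq : (spec V * (C * D + C * δ + D)) ^ 2
        ≤ spec V ^ 2 * (3 * (C ^ 2 * D ^ 2 + C ^ 2 * δ ^ 2 + D ^ 2)) := by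
      have h3 : (C * D + C * δ + D) ^ 2 ≤ 3 * (C ^ 2 * D ^ 2 + C ^ 2 * δ ^ 2 + D ^ 2) := by
        nlinarith [sq_nonneg (C * D - C * δ), sq_nonneg (C * D - D), sq_nonneg (C * δ - D)]
      calc (spec V * (C * D + C * δ + D)) ^ 2
          = spec V ^ 2 * (C * D + C * δ + D) ^ 2 := by ring
        _ ≤ spec V ^ 2 * (3 * (C ^ 2 * D ^ 2 + C ^ 2 * δ ^ 2 + D ^ 2)) :=
            mul_le_mul_of_nonneg_left h3 (sq_nonneg _)
    calc ‖F X i - F Y i‖ ^ 2 ≤ (spec V * (C * D + C * δ + D)) ^ 2 := by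
          apply pow_le_pow_left₀ (norm_nonneg _) hfin
      _ ≤ _ := hsq
  -- sum up
  have hsumsq : ‖F X - F Y‖ ^ 2 ≤ 3 * spec V ^ 2 * (C ^ 2 * (n + 1) + n) * D ^ 2 := by
    have h0 : ‖F X - F Y‖ ^ 2 = ∑ i, ‖F X i - F Y i‖ ^ 2 := by
      rw [PiLp.norm_sq_eq_of_L2]
      exact Finset.sum_congr rfl (fun i _ => by rw [PiLp.sub_apply])
    rw [h0]
    calc ∑ i, ‖F X i - F Y i‖ ^ 2
        ≤ ∑ i : Fin n, spec V ^ 2 * (3 * (C ^ 2 * D ^ 2 + C ^ 2 * ‖X i - Y i‖ ^ 2 + D ^ 2)) :=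
          Finset.sum_le_sum (fun i _ => hkey i)
      _ = 3 * spec V ^ 2 * (C ^ 2 * (n + 1) + n) * D ^ 2 := by
          have e : ∀ x : Fin n, spec V ^ 2 * (3 * (C ^ 2 * D ^ 2 + C ^ 2 * ‖X x - Y x‖ ^ 2 + D ^ 2))
              = (spec V ^ 2 * 3 * C ^ 2) * ‖X x - Y x‖ ^ 2
                + spec V ^ 2 * (3 * (C ^ 2 * D ^ 2 + D ^ 2)) := fun x => by ring
          rw [Finset.sum_congr rfl (fun x _ => e x), Finset.sum_add_distrib, ← Finset.mul_sum,
            ← hDsq, Finset.sum_const, Finset.card_univ, Fintype.card_fin, nsmul_eq_mul]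
          ring
  -- take square roots
  have hE : (0:ℝ) ≤ spec A ^ 2 * R ^ 4 * (n + 1) + n := by positivity
  have hrhs_nn : 0 ≤ Real.sqrt 3 * spec V * Real.sqrt (spec A ^ 2 * R ^ 4 * (n + 1) + n) * D :=
    mul_nonneg (mul_nonneg (mul_nonneg (Real.sqrt_nonneg _) (spec_nonneg V)) (Real.sqrt_nonneg _)) hDnn
  apply le_of_sq_le_sq' (norm_nonneg _) hrhs_nn
  have hrhssq : (Real.sqrt 3 * spec V * Real.sqrt (spec A ^ 2 * R ^ 4 * (n + 1) + n) * D) ^ 2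
      = 3 * spec V ^ 2 * (spec A ^ 2 * R ^ 4 * (n + 1) + n) * D ^ 2 := by
    rw [mul_pow, mul_pow, mul_pow, Real.sq_sqrt (by norm_num : (0:ℝ) ≤ 3), Real.sq_sqrt hE]
  rw [hrhssq]
  have hCE : C ^ 2 = spec A ^ 2 * R ^ 4 := by rw [hC]; ring
  rw [← hCE] at *
  calc ‖F X - F Y‖ ^ 2 ≤ 3 * spec V ^ 2 * (C ^ 2 * (n + 1) + n) * D ^ 2 := hsumsq
    _ = 3 * spec V ^ 2 * (C ^ 2 * (n + 1) + n) * D ^ 2 := rfl
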